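/- Let U ∈ ℝ^{m₁×r} have orthonormal columns, P_U = UU^⊤, and let G ⊆ [m₁]×[m₂] be b-sparse. Define the incoherence constant I(U) = (m₁/r)·max_i ‖e_i^⊤U‖₂². Then for any matrix A ∈ ℝ^{m₁×m₂}, ‖G(P_U A)‖ ≤ √( I(U)·r·b·(b ∧ r) / m₁ ) · ‖A‖. -/

import Mathlib

open scoped Matrix.Norms.L2Operator
open Matrix

/-- `restrict G M` is the matrix `M` with all entries outside the index set `G` set to zero. -/
def Matrix.restrict {m₁ m₂ : ℕ} (G : Finset (Fin m₁ × Fin m₂))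
    (M : Matrix (Fin m₁) (Fin m₂) ℝ) : Matrix (Fin m₁) (Fin m₂) ℝ :=
  fun i j => if (i, j) ∈ G then M i j else 0

/-- `G` is `b`-sparse: every row and every column contains at most `b` indices of `G`. -/
def Matrix.BSparse {m₁ m₂ : ℕ} (G : Finset (Fin m₁ × Fin m₂)) (b : ℕ) : Prop :=
  (∀ i : Fin m₁, (G.filter (fun q => q.1 = i)).card ≤ b) ∧
  (∀ j : Fin m₂, (G.filter (fun q => q.2 = j)).card ≤ b)

/-- The incoherence constant `I(U) = (m/r) maxᵢ ‖eᵢᵀ U‖₂²` of a matrix `U ∈ ℝ^{m×r}`. -/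
noncomputable def Matrix.incoh {m r : ℕ} (U : Matrix (Fin m) (Fin r) ℝ) : ℝ :=
  ((m : ℝ) / r) * ⨆ i : Fin m, ∑ k, (U i k) ^ 2

private lemma euclid_norm_sq {n : ℕ} (v : EuclideanSpace ℝ (Fin n)) :
    ‖v‖ ^ 2 = ∑ i, v i ^ 2 := by
  rw [EuclideanSpace.norm_eq, Real.sq_sqrt (by positivity)]
  simp [sq_abs]

/-- If `U ∈ 𝕆_{m₁,r}` has orthonormal columns with incoherence `I(U)` and the index set `G`
is `b`-sparse, then for every `A`, `‖G(P_U A)‖ ≤ √(I(U)·r·b·(b∧r)/m₁) ‖A‖`,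
where `P_U = UUᵀ`. -/
theorem restrict_proj_l2OpNorm_le {m₁ m₂ r b : ℕ}
    (U : Matrix (Fin m₁) (Fin r) ℝ) (hU : Uᵀ * U = 1)
    (G : Finset (Fin m₁ × Fin m₂)) (hG : Matrix.BSparse G b)
    (A : Matrix (Fin m₁) (Fin m₂) ℝ) :
    ‖Matrix.restrict G (U * Uᵀ * A)‖ ≤
      Real.sqrt (Matrix.incoh U * r * b * (min b r) / m₁) * ‖A‖ := by
  classical
  have hrhs0 : 0 ≤ Real.sqrt (Matrix.incoh U * r * b * (min b r) / m₁) * ‖A‖ :=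
    mul_nonneg (Real.sqrt_nonneg _) (norm_nonneg _)
  rcases Nat.eq_zero_or_pos m₁ with hm | hm
  · subst hm
    have hz : Matrix.restrict G (U * Uᵀ * A) = 0 := by
      ext i j; exact i.elim0
    rw [hz, norm_zero]; exact hrhs0
  rcases Nat.eq_zero_or_pos b with hb | hb
  · subst hb
    have hGe : G = ∅ := by
      rw [Finset.eq_empty_iff_forall_notMem]
      intro q hq
      have h1 := hG.1 q.1
      have h2 : q ∈ G.filter (fun p => p.1 = q.1) := Finset.mem_filter.mpr ⟨hq, rfl⟩
      have h3 := Finset.card_pos.mpr ⟨q, h2⟩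
      omega
    have hz : Matrix.restrict G (U * Uᵀ * A) = 0 := by
      ext i j; simp [Matrix.restrict, hGe]
    rw [hz, norm_zero]; exact hrhs0
  rcases Nat.eq_zero_or_pos r with hr | hr
  · subst hr
    have hU0 : U * Uᵀ = 0 := by
      ext i j; simp [Matrix.mul_apply]
    have hz : Matrix.restrict G (U * Uᵀ * A) = 0 := by
      ext i j; simp [Matrix.restrict, hU0]
    rw [hz, norm_zero]; exact hrhs0
  -- main case
  set μ := ⨆ i : Fin m₁, ∑ k, (U i k) ^ 2 with hμdef
  have hμrow : ∀ i, ∑ k, (U i k) ^ 2 ≤ μ := fun i =>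
    le_ciSup (f := fun i : Fin m₁ => ∑ k, (U i k) ^ 2)
      (Set.Finite.bddAbove (Set.finite_range _)) i
  have hμ0 : 0 ≤ μ := Real.iSup_nonneg fun i => by positivity
  have hUH : Uᴴ = Uᵀ := by
    ext i j; simp [Matrix.conjTranspose_apply]
  have hnontriv : Nonempty (Fin r) := ⟨⟨0, hr⟩⟩
  have hone : (1 : Matrix (Fin r) (Fin r) ℝ) ≠ 0 := one_ne_zero
  have hnorm1 : ‖(1 : Matrix (Fin r) (Fin r) ℝ)‖ = 1 := by
    have h := Matrix.l2_opNorm_conjTranspose_mul_self (1 : Matrix (Fin r) (Fin r) ℝ)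
    rw [Matrix.conjTranspose_one, mul_one] at h
    have h0 : ‖(1 : Matrix (Fin r) (Fin r) ℝ)‖ ≠ 0 := norm_ne_zero_iff.mpr hone
    have h1 : ‖(1 : Matrix (Fin r) (Fin r) ℝ)‖ *
        (‖(1 : Matrix (Fin r) (Fin r) ℝ)‖ - 1) = 0 := by nlinarith [h]
    rcases mul_eq_zero.mp h1 with h2 | h2
    · exact absurd h2 h0
    · linarith
  have hUnorm : ‖U‖ = 1 := by
    have h := Matrix.l2_opNorm_conjTranspose_mul_self U
    rw [hUH, hU, hnorm1] at h
    rcases mul_self_eq_one_iff.mp h.symm with h2 | h2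
    · exact h2
    · nlinarith [norm_nonneg U]
  have hUA : ‖Uᵀ * A‖ ≤ ‖A‖ := by
    calc ‖Uᵀ * A‖ ≤ ‖Uᵀ‖ * ‖A‖ := Matrix.l2_opNorm_mul _ _
      _ = ‖A‖ := by rw [← hUH, Matrix.l2_opNorm_conjTranspose, hUnorm, one_mul]
  -- the per-vector bound
  have key : ∀ x : EuclideanSpace ℝ (Fin m₂),
      ‖(EuclideanSpace.equiv (Fin m₁) ℝ).symm (Matrix.restrict G (U * Uᵀ * A) *ᵥ x)‖
        ≤ Real.sqrt (μ * b) * ‖A‖ * ‖x‖ := by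
    intro x
    set z : Fin m₁ → Fin m₂ → ℝ := fun i j => if (i, j) ∈ G then x j else 0 with hzdef
    set w : Fin m₁ → Fin r → ℝ := fun i => (Uᵀ * A) *ᵥ z i with hwdef
    have hentry : ∀ i, (Matrix.restrict G (U * Uᵀ * A) *ᵥ x) i = ∑ k, U i k * w i k := by
      intro i
      have h1 : (Matrix.restrict G (U * Uᵀ * A) *ᵥ x) i = ((U * Uᵀ * A) *ᵥ z i) i := by
        simp only [Matrix.mulVec, dotProduct, Matrix.restrict, hzdef]
        refine Finset.sum_congr rfl fun j _ => ?_
        by_cases hj : (i, j) ∈ G <;> simp [hj]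
      rw [h1, Matrix.mul_assoc, ← Matrix.mulVec_mulVec]
      simp [Matrix.mulVec, dotProduct, hwdef]
    have hsq : ∀ i, ((Matrix.restrict G (U * Uᵀ * A) *ᵥ x) i) ^ 2
        ≤ μ * (‖A‖ ^ 2 * ∑ j, z i j ^ 2) := by
      intro i
      rw [hentry i]
      have hw2 : ∑ k, w i k ^ 2 ≤ ‖A‖ ^ 2 * ∑ j, z i j ^ 2 := by
        have h1 := Matrix.l2_opNorm_mulVec (Uᵀ * A)
          ((EuclideanSpace.equiv (Fin m₂) ℝ).symm (z i))
        have h2 : ‖(EuclideanSpace.equiv (Fin r) ℝ).symm (w i)‖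
            ≤ ‖A‖ * ‖(EuclideanSpace.equiv (Fin m₂) ℝ).symm (z i)‖ :=
          h1.trans (mul_le_mul_of_nonneg_right hUA (norm_nonneg _))
        have h3 := euclid_norm_sq ((EuclideanSpace.equiv (Fin r) ℝ).symm (w i))
        have h4 := euclid_norm_sq ((EuclideanSpace.equiv (Fin m₂) ℝ).symm (z i))
        calc ∑ k, w i k ^ 2 = ‖(EuclideanSpace.equiv (Fin r) ℝ).symm (w i)‖ ^ 2 := h3.symm
          _ ≤ (‖A‖ * ‖(EuclideanSpace.equiv (Fin m₂) ℝ).symm (z i)‖) ^ 2 :=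
              pow_le_pow_left₀ (norm_nonneg _) h2 2
          _ = ‖A‖ ^ 2 * ‖(EuclideanSpace.equiv (Fin m₂) ℝ).symm (z i)‖ ^ 2 := by
              rw [mul_pow]
          _ = ‖A‖ ^ 2 * ∑ j, z i j ^ 2 := by rw [h4]; rfl
      calc (∑ k, U i k * w i k) ^ 2
          ≤ (∑ k, U i k ^ 2) * ∑ k, w i k ^ 2 :=
            Finset.sum_mul_sq_le_sq_mul_sq _ _ _
        _ ≤ μ * (‖A‖ ^ 2 * ∑ j, z i j ^ 2) :=
            mul_le_mul (hμrow i) hw2 (by positivity) hμ0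
    have hzsum : ∑ i, ∑ j, z i j ^ 2 ≤ (b : ℝ) * ∑ j, x j ^ 2 := by
      have h1 : ∀ i j, z i j ^ 2 = if (i, j) ∈ G then x j ^ 2 else 0 := by
        intro i j; by_cases h : (i, j) ∈ G <;> simp [hzdef, h]
      calc ∑ i, ∑ j, z i j ^ 2
          = ∑ q : Fin m₁ × Fin m₂, (if q ∈ G then x q.2 ^ 2 else 0) := by
            rw [Fintype.sum_prod_type]
            exact Finset.sum_congr rfl fun i _ => Finset.sum_congr rfl fun j _ => h1 i j
        _ = ∑ q ∈ G, x q.2 ^ 2 := by rw [Finset.sum_ite_mem, Finset.univ_inter]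
        _ = ∑ j, ∑ q ∈ G.filter (fun q => q.2 = j), x q.2 ^ 2 :=
            (Finset.sum_fiberwise_of_maps_to (fun q _ => Finset.mem_univ q.2) _).symm
        _ ≤ ∑ j, (b : ℝ) * x j ^ 2 := by
            refine Finset.sum_le_sum fun j _ => ?_
            have hcard := hG.2 j
            have hconst : ∑ q ∈ G.filter (fun q => q.2 = j), x q.2 ^ 2
                = ((G.filter (fun q => q.2 = j)).card : ℝ) * x j ^ 2 := by
              rw [Finset.sum_congr rfl (fun q hq => by
                rw [(Finset.mem_filter.mp hq).2]), Finset.sum_const, nsmul_eq_mul]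
            rw [hconst]
            exact mul_le_mul_of_nonneg_right (by exact_mod_cast hcard) (sq_nonneg _)
        _ = (b : ℝ) * ∑ j, x j ^ 2 := (Finset.mul_sum _ _ _).symm
    have hsum : ‖(EuclideanSpace.equiv (Fin m₁) ℝ).symm (Matrix.restrict G (U * Uᵀ * A) *ᵥ x)‖ ^ 2
        ≤ (μ * b) * ‖A‖ ^ 2 * ‖x‖ ^ 2 := by
      rw [euclid_norm_sq]
      calc ∑ i, ((Matrix.restrict G (U * Uᵀ * A) *ᵥ x) i) ^ 2
          ≤ ∑ i, μ * (‖A‖ ^ 2 * ∑ j, z i j ^ 2) := Finset.sum_le_sum fun i _ => hsq i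
        _ = μ * ‖A‖ ^ 2 * ∑ i, ∑ j, z i j ^ 2 := by
            rw [Finset.mul_sum]
            exact Finset.sum_congr rfl fun i _ => by ring
        _ ≤ μ * ‖A‖ ^ 2 * ((b : ℝ) * ∑ j, x j ^ 2) :=
            mul_le_mul_of_nonneg_left hzsum (by positivity)
        _ = (μ * b) * ‖A‖ ^ 2 * ∑ j, x j ^ 2 := by ring
        _ = (μ * b) * ‖A‖ ^ 2 * ‖x‖ ^ 2 := by rw [euclid_norm_sq x]
    have hR0 : 0 ≤ Real.sqrt (μ * b) * ‖A‖ * ‖x‖ := by positivity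
    calc ‖(EuclideanSpace.equiv (Fin m₁) ℝ).symm (Matrix.restrict G (U * Uᵀ * A) *ᵥ x)‖
        = Real.sqrt (‖(EuclideanSpace.equiv (Fin m₁) ℝ).symm
            (Matrix.restrict G (U * Uᵀ * A) *ᵥ x)‖ ^ 2) :=
          (Real.sqrt_sq (norm_nonneg _)).symm
      _ ≤ Real.sqrt ((μ * b) * ‖A‖ ^ 2 * ‖x‖ ^ 2) := Real.sqrt_le_sqrt hsum
      _ = Real.sqrt (μ * b) * ‖A‖ * ‖x‖ := by
          rw [show (μ * b) * ‖A‖ ^ 2 * ‖x‖ ^ 2 = (Real.sqrt (μ * b) * ‖A‖ * ‖x‖) ^ 2 by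
            rw [mul_pow, mul_pow, Real.sq_sqrt (by positivity)], Real.sqrt_sq hR0]
  have hMle : ‖Matrix.restrict G (U * Uᵀ * A)‖ ≤ Real.sqrt (μ * b) * ‖A‖ := by
    rw [Matrix.l2_opNorm_def]
    exact ContinuousLinearMap.opNorm_le_bound _ (by positivity) fun x => key x
  refine hMle.trans (mul_le_mul_of_nonneg_right ?_ (norm_nonneg _))
  apply Real.sqrt_le_sqrt
  have hr' : (r : ℝ) ≠ 0 := Nat.cast_ne_zero.mpr hr.ne'
  have hm' : (m₁ : ℝ) ≠ 0 := Nat.cast_ne_zero.mpr hm.ne'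
  have heq : Matrix.incoh U * r * b * (min b r) / m₁ = μ * b * (min b r) := by
    rw [Matrix.incoh, ← hμdef]
    field_simp
  rw [heq]
  have hmin : (1 : ℝ) ≤ ((min b r : ℕ) : ℝ) := by
    exact_mod_cast le_min hb hr
  exact le_mul_of_one_le_right (mul_nonneg hμ0 (Nat.cast_nonneg b)) hmin
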